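/- For all integers k ≥ 0 and j ≥ 1, the generalized transformation coefficients and the exponential harmonic numbers are related by S(k, j) / j = Σ_{m=1}^{j} (H_m^{(k+1)} / m!) · (−1)^{j−m} / (j−m)!. -/

import Mathlib

/-- The generalized transformation coefficient
`S k j = (1/j!) · Σ_{m=1}^{j} C(j,m) · (−1)^{j−m} · m^{−k}`. -/
noncomputable def S (k j : ℕ) : ℝ :=
  (1 / (Nat.factorial j : ℝ)) *
    ∑ m ∈ Finset.Icc 1 j, (Nat.choose j m : ℝ) * (-1 : ℝ) ^ (j - m) / (m : ℝ) ^ k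

/-- The `r`-order harmonic number `H r n = Σ_{m=1}^{n} 1/m^r`. -/
noncomputable def H (r n : ℕ) : ℝ :=
  ∑ m ∈ Finset.Icc 1 n, 1 / (m : ℝ) ^ r

private lemma keyS (d : ℕ) : ∀ i : ℕ, 1 ≤ i →
    ∑ m ∈ Finset.Icc i (i + d), (-1 : ℝ) ^ (i + d - m) * (Nat.choose (i + d) m : ℝ)
      = (-1 : ℝ) ^ d * (Nat.choose (i + d - 1) (i - 1) : ℝ) := by
  induction d with
  | zero =>
    intro i hi
    simp
  | succ d ih =>
    intro i hi
    obtain ⟨i', rfl⟩ : ∃ i', i = i' + 1 := ⟨i - 1, by omega⟩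
    have e : i' + 1 + (d + 1) = i' + 2 + d := by omega
    rw [e]
    have hset : Finset.Icc (i' + 1) (i' + 2 + d)
        = insert (i' + 1) (Finset.Icc (i' + 2) (i' + 2 + d)) := by
      ext x; simp [Finset.mem_Icc]; omega
    rw [hset, Finset.sum_insert (by simp [Finset.mem_Icc])]
    rw [ih (i' + 2) (by omega)]
    have h1 : i' + 2 + d - (i' + 1) = d + 1 := by omega
    have h2 : i' + 2 + d - 1 = i' + 1 + d := by omega
    have h3 : i' + 2 - 1 = i' + 1 := by omega
    have h4 : i' + 1 - 1 = i' := by omega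
    rw [h1, h2, h3, h4]
    rw [show i' + 2 + d = i' + 1 + d + 1 from by omega, Nat.choose_succ_succ (i' + 1 + d) i']
    push_cast
    ring

private lemma innerS (i j : ℕ) (hi : 1 ≤ i) (hij : i ≤ j) :
    ∑ m ∈ Finset.Icc i j, (-1 : ℝ) ^ (j - m) * (Nat.choose j m : ℝ)
      = (-1 : ℝ) ^ (j - i) * (Nat.choose (j - 1) (i - 1) : ℝ) := by
  obtain ⟨d, rfl⟩ := Nat.exists_eq_add_of_le hij
  rw [show i + d - i = d from by omega]
  exact keyS d i hi

theorem stmt_9 (k j : ℕ) (hj : 1 ≤ j) :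
    S k j / (j : ℝ) = ∑ m ∈ Finset.Icc 1 j,
      (H (k + 1) m / (Nat.factorial m : ℝ)) * (-1 : ℝ) ^ (j - m)
        / (Nat.factorial (j - m) : ℝ) := by
  have hjR : (j : ℝ) ≠ 0 := by positivity
  have hjf : (Nat.factorial j : ℝ) ≠ 0 := by
    exact_mod_cast Nat.factorial_ne_zero j
  -- Step 1: RHS as a double sum, then swap
  have step1 : (∑ m ∈ Finset.Icc 1 j,
      (H (k + 1) m / (Nat.factorial m : ℝ)) * (-1 : ℝ) ^ (j - m)
        / (Nat.factorial (j - m) : ℝ))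
      = ∑ m ∈ Finset.Icc 1 j, ∑ i ∈ Finset.Icc 1 m,
        (1 / (i : ℝ) ^ (k + 1)) *
          ((-1 : ℝ) ^ (j - m) / ((Nat.factorial m : ℝ) * (Nat.factorial (j - m) : ℝ))) := by
    refine Finset.sum_congr rfl fun m _ => ?_
    rw [H, Finset.sum_div, Finset.sum_mul, Finset.sum_div]
    exact Finset.sum_congr rfl fun i _ => by ring
  have step2 : (∑ m ∈ Finset.Icc 1 j, ∑ i ∈ Finset.Icc 1 m,
        (1 / (i : ℝ) ^ (k + 1)) *
          ((-1 : ℝ) ^ (j - m) / ((Nat.factorial m : ℝ) * (Nat.factorial (j - m) : ℝ))))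
      = ∑ i ∈ Finset.Icc 1 j, ∑ m ∈ Finset.Icc i j,
        (1 / (i : ℝ) ^ (k + 1)) *
          ((-1 : ℝ) ^ (j - m) / ((Nat.factorial m : ℝ) * (Nat.factorial (j - m) : ℝ))) := by
    refine Finset.sum_comm' ?_
    intro m i
    simp only [Finset.mem_Icc]
    omega
  have step3 : ∀ i ∈ Finset.Icc 1 j,
      (∑ m ∈ Finset.Icc i j,
        (1 / (i : ℝ) ^ (k + 1)) *
          ((-1 : ℝ) ^ (j - m) / ((Nat.factorial m : ℝ) * (Nat.factorial (j - m) : ℝ))))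
      = (1 / (i : ℝ) ^ (k + 1)) *
          ((-1 : ℝ) ^ (j - i) * (Nat.choose (j - 1) (i - 1) : ℝ) / (Nat.factorial j : ℝ)) := by
    intro i hi
    simp only [Finset.mem_Icc] at hi
    rw [← Finset.mul_sum]
    congr 1
    have h1 : ∀ m ∈ Finset.Icc i j,
        (-1 : ℝ) ^ (j - m) / ((Nat.factorial m : ℝ) * (Nat.factorial (j - m) : ℝ))
        = ((-1 : ℝ) ^ (j - m) * (Nat.choose j m : ℝ)) / (Nat.factorial j : ℝ) := by
      intro m hm
      simp only [Finset.mem_Icc] at hm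
      rw [Nat.cast_choose ℝ hm.2]
      have hmf : (Nat.factorial m : ℝ) ≠ 0 := by exact_mod_cast Nat.factorial_ne_zero m
      have hmf2 : (Nat.factorial (j - m) : ℝ) ≠ 0 := by
        exact_mod_cast Nat.factorial_ne_zero (j - m)
      field_simp
    rw [Finset.sum_congr rfl h1, ← Finset.sum_div, innerS i j hi.1 hi.2]
  rw [step1, step2, Finset.sum_congr rfl step3]
  -- Step 4: LHS as a sum, and compare termwise
  rw [S, Finset.mul_sum, Finset.sum_div]
  refine Finset.sum_congr rfl fun m hm => ?_
  simp only [Finset.mem_Icc] at hm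
  have hmR : (m : ℝ) ≠ 0 := by
    have : 0 < m := hm.1
    positivity
  have hkey : (j : ℝ) * (Nat.choose (j - 1) (m - 1) : ℝ) = (Nat.choose j m : ℝ) * (m : ℝ) := by
    have h := Nat.add_one_mul_choose_eq (j - 1) (m - 1)
    have h1 : j - 1 + 1 = j := by omega
    have h2 : m - 1 + 1 = m := by omega
    rw [h1, h2] at h
    exact_mod_cast h
  rw [pow_succ]
  field_simp
  linear_combination (-1 : ℝ) * hkey
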